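/- For any real n×m matrix Θ, the nuclear norm of Θ equals the minimum over all factorizations Θ = U Vᵀ (with U an n×r matrix and V an m×r matrix for some r) of (1/2)‖U‖_F² + (1/2)‖V‖_F². -/

import Mathlib

open Matrix BigOperators

/-- Nuclear norm: sum of singular values, i.e. trace of the PSD square root of `Θᵀ * Θ`. -/
noncomputable def nuclearNorm {n m : ℕ} (Θ : Matrix (Fin n) (Fin m) ℝ) : ℝ :=
  (((Matrix.posSemidef_conjTranspose_mul_self Θ).isHermitian.eigenvectorUnitary :
        Matrix (Fin m) (Fin m) ℝ) *
      diagonal ((RCLike.ofReal : ℝ → ℝ) ∘ (√·) ∘ (Matrix.posSemidef_conjTranspose_mul_self Θ).isHermitian.eigenvalues) *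
      (star (Matrix.posSemidef_conjTranspose_mul_self Θ).isHermitian.eigenvectorUnitary :
        Matrix (Fin m) (Fin m) ℝ)).trace

/-- Frobenius norm. -/
noncomputable def frobNorm {n m : ℕ} (A : Matrix (Fin n) (Fin m) ℝ) : ℝ :=
  Real.sqrt (∑ i, ∑ j, (A i j) ^ 2)

/-- `B` is the Moore–Penrose pseudoinverse of `A` (the four Penrose conditions). -/
def IsMoorePenrose {n m : ℕ} (A : Matrix (Fin n) (Fin m) ℝ) (B : Matrix (Fin m) (Fin n) ℝ) : Prop :=
  A * B * A = A ∧ B * A * B = B ∧ (A * B)ᵀ = A * B ∧ (B * A)ᵀ = B * A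

/-- `Pr` is the orthogonal projection matrix onto the subspace `S`. -/
def IsOrthProjOnto {n : ℕ} (Pr : Matrix (Fin n) (Fin n) ℝ) (S : Submodule ℝ (Fin n → ℝ)) : Prop :=
  Prᵀ = Pr ∧ Pr * Pr = Pr ∧ LinearMap.range Pr.mulVecLin = S

lemma trace_tmul {p q : ℕ} (X : Matrix (Fin p) (Fin q) ℝ) :
    (Xᵀ * X).trace = ∑ j, ∑ i, X i j ^ 2 := by
  simp [Matrix.trace, Matrix.diag, Matrix.mul_apply, sq]

lemma trace_tmul_nonneg {p q : ℕ} (X : Matrix (Fin p) (Fin q) ℝ) :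
    0 ≤ (Xᵀ * X).trace := by
  rw [trace_tmul]; positivity

lemma frob_sq {p q : ℕ} (X : Matrix (Fin p) (Fin q) ℝ) :
    frobNorm X ^ 2 = (Xᵀ * X).trace := by
  rw [frobNorm, Real.sq_sqrt (by positivity), trace_tmul, Finset.sum_comm]

/-- Fazel–Srebro: the nuclear norm of Θ is the minimum of (1/2)‖U‖_F² + (1/2)‖V‖_F²
over all factorizations Θ = U Vᵀ. -/
theorem stmt_0 {n m : ℕ} (Θ : Matrix (Fin n) (Fin m) ℝ) :
    IsLeast {c : ℝ | ∃ (r : ℕ) (U : Matrix (Fin n) (Fin r) ℝ) (V : Matrix (Fin m) (Fin r) ℝ),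
        Θ = U * Vᵀ ∧ c = (1 / 2) * frobNorm U ^ 2 + (1 / 2) * frobNorm V ^ 2}
      (nuclearNorm Θ) := by
  set hA := Matrix.posSemidef_conjTranspose_mul_self Θ with hAdef
  set B : Matrix (Fin m) (Fin m) ℝ := (hA.1.eigenvectorUnitary : Matrix (Fin m) (Fin m) ℝ) with hB
  set d : Fin m → ℝ := hA.1.eigenvalues with hd
  have hspec : Θᴴ * Θ = B * Matrix.diagonal d * Bᵀ := by
    have := hA.1.spectral_theorem
    rw [this]
    rfl
  have hBtB : Bᵀ * B = 1 := by
    have h := Matrix.mem_unitaryGroup_iff'.mp hA.1.eigenvectorUnitary.2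
    simp only [Matrix.star_eq_conjTranspose, Matrix.conjTranspose_eq_transpose_of_trivial] at h
    exact h
  have hBBt : B * Bᵀ = 1 := by
    have h := Matrix.mem_unitaryGroup_iff.mp hA.1.eigenvectorUnitary.2
    simp only [Matrix.star_eq_conjTranspose, Matrix.conjTranspose_eq_transpose_of_trivial] at h
    exact h
  have hdnn : ∀ i, 0 ≤ d i := fun i => hA.eigenvalues_nonneg i
  have htrdiag : ∀ f : Fin m → ℝ, (B * Matrix.diagonal f * Bᵀ).trace = ∑ i, f i := by
    intro f
    rw [Matrix.trace_mul_comm, ← Matrix.mul_assoc, hBtB, Matrix.one_mul, Matrix.trace_diagonal]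
  set s : Fin m → ℝ := fun i => Real.sqrt (d i) with hs
  have hnn : nuclearNorm Θ = ∑ i, s i := by
    rw [nuclearNorm]
    show (B * Matrix.diagonal (Real.sqrt ∘ d) * Bᵀ).trace = _
    rw [htrdiag]
    rfl
  -- C = Θ * B
  set C : Matrix (Fin n) (Fin m) ℝ := Θ * B with hC
  have hCtC : Cᵀ * C = Matrix.diagonal d := by
    have hΘt : Θᴴ = Θᵀ := Matrix.conjTranspose_eq_transpose_of_trivial Θ
    rw [hC, Matrix.transpose_mul]
    calc Bᵀ * Θᵀ * (Θ * B) = Bᵀ * (Θᴴ * Θ) * B := by simp only [hΘt, Matrix.mul_assoc]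
      _ = (Bᵀ * B) * Matrix.diagonal d * (Bᵀ * B) := by simp only [hspec, Matrix.mul_assoc]
      _ = Matrix.diagonal d := by rw [hBtB]; simp
  have hCzero : ∀ i, d i = 0 → ∀ k, C k i = 0 := by
    intro i hdi k
    have h1 : (Cᵀ * C) i i = d i := by rw [hCtC]; simp
    have h2 : (Cᵀ * C) i i = ∑ l, C l i ^ 2 := by simp [Matrix.mul_apply, sq]
    have h3 : ∑ l, C l i ^ 2 = 0 := by rw [← h2, h1, hdi]
    have := (Finset.sum_eq_zero_iff_of_nonneg (fun l _ => sq_nonneg (C l i))).mp h3 k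
      (Finset.mem_univ k)
    exact (pow_eq_zero_iff two_ne_zero).mp this
  have hCdiag : ∀ f g : Fin m → ℝ, (∀ i, d i ≠ 0 → f i = g i) →
      C * Matrix.diagonal f = C * Matrix.diagonal g := by
    intro f g hfg
    ext k i
    rw [Matrix.mul_diagonal, Matrix.mul_diagonal]
    by_cases hdi : d i = 0
    · rw [hCzero i hdi k]; ring
    · rw [hfg i hdi]
  have hCB : C * Bᵀ = Θ := by rw [hC, Matrix.mul_assoc, hBBt, Matrix.mul_one]
  constructor
  · -- membership
    set t : Fin m → ℝ := fun i => Real.sqrt (s i) with ht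
    set e : Fin m → ℝ := fun i => if d i = 0 then 0 else (t i)⁻¹ with he
    have htpos : ∀ i, d i ≠ 0 → 0 < t i := by
      intro i hdi
      have : 0 < d i := lt_of_le_of_ne (hdnn i) (Ne.symm hdi)
      exact Real.sqrt_pos.mpr (Real.sqrt_pos.mpr this)
    have hts : ∀ i, t i ^ 2 = s i := fun i => Real.sq_sqrt (Real.sqrt_nonneg _)
    have hsd : ∀ i, s i ^ 2 = d i := fun i => Real.sq_sqrt (hdnn i)
    refine ⟨m, C * Matrix.diagonal e, B * Matrix.diagonal t, ?_, ?_⟩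
    · calc Θ = C * Bᵀ := hCB.symm
        _ = C * Matrix.diagonal (fun i => e i * t i) * Bᵀ := by
            rw [hCdiag (fun i => e i * t i) (fun _ => 1) ?_]
            · simp
            · intro i hdi
              simp only [he, if_neg hdi]
              exact inv_mul_cancel₀ (ne_of_gt (htpos i hdi))
        _ = C * Matrix.diagonal e * (B * Matrix.diagonal t)ᵀ := by
            rw [Matrix.transpose_mul, Matrix.diagonal_transpose,
              ← Matrix.diagonal_mul_diagonal]
            simp only [Matrix.mul_assoc]
    · have hU2 : frobNorm (C * Matrix.diagonal e) ^ 2 = ∑ i, s i := by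
        rw [frob_sq, Matrix.transpose_mul, Matrix.diagonal_transpose]
        have : Matrix.diagonal e * Cᵀ * (C * Matrix.diagonal e)
            = Matrix.diagonal (fun i => e i * (d i * e i)) := by
          rw [Matrix.mul_assoc, ← Matrix.mul_assoc Cᵀ, hCtC, Matrix.diagonal_mul_diagonal,
            Matrix.diagonal_mul_diagonal]
        rw [this, Matrix.trace_diagonal]
        refine Finset.sum_congr rfl fun i _ => ?_
        by_cases hdi : d i = 0
        · simp [he, hs, if_pos hdi, hdi]
        · simp only [he, if_neg hdi]
          have ht0 : t i ≠ 0 := ne_of_gt (htpos i hdi)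
          have hs0 : s i ≠ 0 := by
            intro h0
            apply hdi; rw [← hsd i, h0]; ring
          field_simp
          rw [← hsd i, ← hts i]; ring
      have hV2 : frobNorm (B * Matrix.diagonal t) ^ 2 = ∑ i, s i := by
        rw [frob_sq, Matrix.transpose_mul, Matrix.diagonal_transpose]
        have : Matrix.diagonal t * Bᵀ * (B * Matrix.diagonal t)
            = Matrix.diagonal (fun i => t i * t i) := by
          rw [Matrix.mul_assoc, ← Matrix.mul_assoc Bᵀ, hBtB, Matrix.one_mul,
            Matrix.diagonal_mul_diagonal]
        rw [this, Matrix.trace_diagonal]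
        refine Finset.sum_congr rfl fun i _ => ?_
        rw [← hts i]; ring
      rw [hU2, hV2, hnn]; ring
  · -- lower bound
    rintro c ⟨r, U, V, hfac, rfl⟩
    set e' : Fin m → ℝ := fun i => if d i = 0 then 0 else (s i)⁻¹ with he'
    have hspos : ∀ i, d i ≠ 0 → 0 < s i :=
      fun i hdi => Real.sqrt_pos.mpr (lt_of_le_of_ne (hdnn i) (Ne.symm hdi))
    set A' : Matrix (Fin n) (Fin m) ℝ := C * Matrix.diagonal e' with hA'
    set j : Fin m → ℝ := fun i => if d i = 0 then 0 else 1 with hj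
    have hAtA : A'ᵀ * A' = Matrix.diagonal j := by
      rw [hA', Matrix.transpose_mul, Matrix.diagonal_transpose, Matrix.mul_assoc,
        ← Matrix.mul_assoc Cᵀ, hCtC, Matrix.diagonal_mul_diagonal,
        Matrix.diagonal_mul_diagonal]
      refine congrArg Matrix.diagonal (funext fun i => ?_)
      by_cases hdi : d i = 0
      · simp [he', hj, hdi]
      · simp only [he', hj, if_neg hdi]
        have hs0 : s i ≠ 0 := ne_of_gt (hspos i hdi)
        have hss : s i * s i = d i := by rw [← sq]; exact Real.sq_sqrt (hdnn i)
        field_simp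
        linarith [hss]
    set V' : Matrix (Fin m) (Fin r) ℝ := Bᵀ * V with hV'
    have hCUV : C = U * V'ᵀ := by
      rw [hV', Matrix.transpose_mul, Matrix.transpose_transpose, hC, hfac,
        Matrix.mul_assoc]
    have htrAC : (A'ᵀ * C).trace = ∑ i, s i := by
      rw [hA', Matrix.transpose_mul, Matrix.diagonal_transpose, Matrix.mul_assoc, hCtC,
        Matrix.diagonal_mul_diagonal, Matrix.trace_diagonal]
      refine Finset.sum_congr rfl fun i _ => ?_
      by_cases hdi : d i = 0
      · simp [he', hs, if_pos hdi, hdi]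
      · simp only [he', if_neg hdi]
        have hs0 : s i ≠ 0 := ne_of_gt (hspos i hdi)
        have hsd : s i * s i = d i := by rw [← sq]; exact Real.sq_sqrt (hdnn i)
        field_simp
        linarith [hsd]
    -- expand trace as double sum
    have hexp : (A'ᵀ * C).trace = ∑ i, ∑ k, (A'ᵀ * U) i k * V' i k := by
      rw [hCUV, ← Matrix.mul_assoc]
      simp [Matrix.trace, Matrix.diag, Matrix.mul_apply, Matrix.transpose_apply]
    have hbound : ∑ i, ∑ k, (A'ᵀ * U) i k * V' i k ≤
        (1 / 2) * (∑ i, ∑ k, ((A'ᵀ * U) i k) ^ 2) + (1 / 2) * (∑ i, ∑ k, (V' i k) ^ 2) := by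
      rw [Finset.mul_sum, Finset.mul_sum, ← Finset.sum_add_distrib]
      refine Finset.sum_le_sum fun i _ => ?_
      rw [Finset.mul_sum, Finset.mul_sum, ← Finset.sum_add_distrib]
      refine Finset.sum_le_sum fun k _ => ?_
      nlinarith [sq_nonneg ((A'ᵀ * U) i k - V' i k)]
    have hVsum : ∑ i, ∑ k, (V' i k) ^ 2 = frobNorm V ^ 2 := by
      have h1 : ∑ i, ∑ k, (V' i k) ^ 2 = (V'ᵀ * V').trace := by
        rw [trace_tmul]; exact Finset.sum_comm
      rw [h1, hV', Matrix.transpose_mul, Matrix.transpose_transpose, Matrix.mul_assoc,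
        ← Matrix.mul_assoc B, hBBt, Matrix.one_mul, frob_sq]
    have hUsum : ∑ i, ∑ k, ((A'ᵀ * U) i k) ^ 2 ≤ frobNorm U ^ 2 := by
      have h1 : ∑ i, ∑ k, ((A'ᵀ * U) i k) ^ 2 = ((A'ᵀ * U)ᵀ * (A'ᵀ * U)).trace := by
        rw [trace_tmul]; exact Finset.sum_comm
      set P : Matrix (Fin n) (Fin n) ℝ := A' * A'ᵀ with hP
      have hPt : Pᵀ = P := by rw [hP, Matrix.transpose_mul, Matrix.transpose_transpose]
      have hAj : A' * Matrix.diagonal j = A' := by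
        rw [hA', Matrix.mul_assoc, Matrix.diagonal_mul_diagonal]
        apply hCdiag
        intro i hdi
        simp [he', hj, if_neg hdi]
      have hPP : P * P = P := by
        rw [hP, Matrix.mul_assoc, ← Matrix.mul_assoc A'ᵀ, hAtA, ← Matrix.mul_assoc, hAj]
      have hQ : (1 - P)ᵀ * (1 - P) = 1 - P := by
        rw [Matrix.transpose_sub, Matrix.transpose_one, hPt, Matrix.sub_mul,
          Matrix.mul_sub, Matrix.mul_sub, hPP]
        simp
      have h2 : ((A'ᵀ * U)ᵀ * (A'ᵀ * U)).trace = (Uᵀ * (P * U)).trace := by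
        rw [Matrix.transpose_mul, Matrix.transpose_transpose, hP]
        simp only [Matrix.mul_assoc]
      have h3 : 0 ≤ (Uᵀ * ((1 - P) * U)).trace := by
        have : Uᵀ * ((1 - P) * U) = ((1 - P) * U)ᵀ * ((1 - P) * U) := by
          calc Uᵀ * ((1 - P) * U) = Uᵀ * ((1 - P)ᵀ * (1 - P) * U) := by rw [hQ]
            _ = ((1 - P) * U)ᵀ * ((1 - P) * U) := by
                rw [Matrix.transpose_mul]
                simp only [Matrix.mul_assoc]
        rw [this]
        exact trace_tmul_nonneg _
      have h4 : Uᵀ * U = Uᵀ * (P * U) + Uᵀ * ((1 - P) * U) := by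
        rw [← Matrix.mul_add, ← Matrix.add_mul]
        simp
      rw [h1, h2, frob_sq]
      have := Matrix.trace_add (Uᵀ * (P * U)) (Uᵀ * ((1 - P) * U))
      rw [h4, this]
      linarith
    rw [hnn, ← htrAC, hexp]
    calc ∑ i, ∑ k, (A'ᵀ * U) i k * V' i k
        ≤ (1 / 2) * (∑ i, ∑ k, ((A'ᵀ * U) i k) ^ 2) + (1 / 2) * (∑ i, ∑ k, (V' i k) ^ 2) :=
          hbound
      _ ≤ (1 / 2) * frobNorm U ^ 2 + (1 / 2) * frobNorm V ^ 2 := by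
          rw [hVsum]
          have := hUsum
          linarith
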